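/- Let a, b > 0, ω̃ = (1/√a + 1/√b)/2, and let C : ℝ → ℝ be the solution of x'' + a·x⁺ − b·x⁻ = 0 with x(0) = 1, x'(0) = 0. Then C is periodic with period 2πω̃: C(t + 2πω̃) = C(t) for all t ∈ ℝ. -/

import Mathlib

open Real Set

private lemma uniq_aux {F : ℝ × ℝ → ℝ × ℝ} {K : NNReal} (hF : LipschitzWith K F)
    {f g : ℝ → ℝ × ℝ} {s e : ℝ}
    (hf : ∀ t ∈ Icc s e, HasDerivAt f (F (f t)) t)
    (hg : ∀ t ∈ Icc s e, HasDerivAt g (F (g t)) t)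
    (h0 : f s = g s) : ∀ t ∈ Icc s e, f t = g t :=
  ODE_solution_unique (v := fun _ x => F x) (fun _ => hF)
    (fun t ht => (hf t ht).continuousAt.continuousWithinAt)
    (fun t ht => (hf t (Ico_subset_Icc_self ht)).hasDerivWithinAt)
    (fun t ht => (hg t ht).continuousAt.continuousWithinAt)
    (fun t ht => (hg t (Ico_subset_Icc_self ht)).hasDerivWithinAt)
    h0

private lemma uniq_aux2 {F : ℝ × ℝ → ℝ × ℝ} {K : NNReal} (hF : LipschitzWith K F)
    {f g : ℝ → ℝ × ℝ}
    (hf : ∀ t, HasDerivAt f (F (f t)) t)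
    (hg : ∀ t, HasDerivAt g (F (g t)) t)
    (h0 : f 0 = g 0) : ∀ t, f t = g t := by
  intro t
  have h : EqOn f g (Icc (-(|t|+1)) (|t|+1)) := by
    apply ODE_solution_unique_of_mem_Icc (v := fun _ x => F x) (s := fun _ => (univ : Set (ℝ×ℝ)))
      (fun _ _ => hF.lipschitzOnWith) (t₀ := 0)
    · constructor <;> [linarith [abs_nonneg t]; linarith [abs_nonneg t]]
    · exact fun u _ => (hf u).continuousAt.continuousWithinAt
    · exact fun u _ => hf u
    · exact fun _ _ => trivial
    · exact fun u _ => (hg u).continuousAt.continuousWithinAt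
    · exact fun u _ => hg u
    · exact fun _ _ => trivial
    · exact h0
  exact h ⟨by linarith [neg_abs_le t], by linarith [le_abs_self t]⟩

/-- The solution `C` of the asymmetric oscillator is periodic with period
`2π ω̃`, where `ω̃ = (1/√a + 1/√b)/2`. -/
theorem stmt_3 (a b : ℝ) (ha : 0 < a) (hb : 0 < b) (C : ℝ → ℝ)
    (ω' : ℝ) (hω : ω' = (1 / Real.sqrt a + 1 / Real.sqrt b) / 2)
    (hC1 : Differentiable ℝ C) (hC2 : Differentiable ℝ (deriv C))
    (hode : ∀ t : ℝ, deriv (deriv C) t + a * max (C t) 0 - b * max (-(C t)) 0 = 0)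
    (hinit0 : C 0 = 1) (hinit1 : deriv C 0 = 0) :
    ∀ t : ℝ, C (t + 2 * π * ω') = C t := by
  have hπ := Real.pi_pos
  set α := Real.sqrt a with hαdef
  set β := Real.sqrt b with hβdef
  have hα0 : 0 < α := Real.sqrt_pos.mpr ha
  have hβ0 : 0 < β := Real.sqrt_pos.mpr hb
  have hαa : α ^ 2 = a := Real.sq_sqrt ha.le
  have hβb : β ^ 2 = b := Real.sq_sqrt hb.le
  set F : ℝ × ℝ → ℝ × ℝ := fun p => (p.2, b * max (-p.1) 0 - a * max p.1 0) with hFdef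
  -- Lipschitz
  have hFlip : LipschitzWith (max 1 ⟨a + b, by positivity⟩) F := by
    apply LipschitzWith.prodMk LipschitzWith.prod_snd
    apply LipschitzWith.of_dist_le_mul
    intro p q
    have h1 : |max (-p.1) 0 - max (-q.1) 0| ≤ |p.1 - q.1| := by
      have := abs_max_sub_max_le_abs (-p.1) (-q.1) 0
      calc |max (-p.1) 0 - max (-q.1) 0| ≤ |(-p.1) - (-q.1)| := this
        _ = |p.1 - q.1| := by rw [← abs_neg]; ring_nf
    have h2 : |max p.1 0 - max q.1 0| ≤ |p.1 - q.1| := abs_max_sub_max_le_abs _ _ _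
    have h3 : dist p.1 q.1 ≤ dist p q := le_trans (le_max_left _ _) (Prod.dist_eq (x := p) (y := q)).ge
    rw [Real.dist_eq] at *
    have : |(b * max (-p.1) 0 - a * max p.1 0) - (b * max (-q.1) 0 - a * max q.1 0)|
        ≤ b * |max (-p.1) 0 - max (-q.1) 0| + a * |max p.1 0 - max q.1 0| := by
      have := abs_sub (b * max (-p.1) 0 - b * max (-q.1) 0) (a * max p.1 0 - a * max q.1 0)
      calc |(b * max (-p.1) 0 - a * max p.1 0) - (b * max (-q.1) 0 - a * max q.1 0)|
          = |(b * max (-p.1) 0 - b * max (-q.1) 0) - (a * max p.1 0 - a * max q.1 0)| := by ring_nf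
        _ ≤ |b * max (-p.1) 0 - b * max (-q.1) 0| + |a * max p.1 0 - a * max q.1 0| := abs_sub _ _
        _ = b * |max (-p.1) 0 - max (-q.1) 0| + a * |max p.1 0 - max q.1 0| := by
            rw [← mul_sub, ← mul_sub, abs_mul, abs_mul, abs_of_pos hb, abs_of_pos ha]
    have hd : |p.1 - q.1| ≤ dist p q := h3
    have hd0 : (0:ℝ) ≤ dist p q := dist_nonneg
    show _ ≤ (a + b) * dist p q
    calc |(b * max (-p.1) 0 - a * max p.1 0) - (b * max (-q.1) 0 - a * max q.1 0)|
        ≤ b * |p.1 - q.1| + a * |p.1 - q.1| := by nlinarith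
      _ = (a + b) * |p.1 - q.1| := by ring
      _ ≤ (a + b) * dist p q := by nlinarith
  -- the solution pair
  set g : ℝ → ℝ × ℝ := fun t => (C t, deriv C t) with hgdef
  have hg' : ∀ t, HasDerivAt g (F (g t)) t := by
    intro t
    have h1 : HasDerivAt C (deriv C t) t := (hC1 t).hasDerivAt
    have h2 : HasDerivAt (deriv C) (deriv (deriv C) t) t := (hC2 t).hasDerivAt
    have he : deriv (deriv C) t = b * max (-(C t)) 0 - a * max (C t) 0 := by
      have := hode t
      linarith
    rw [he] at h2
    exact h1.prodMk h2
  -- junction times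
  set τ₁ : ℝ := π / (2 * α) with hτ₁def
  set τ₂ : ℝ := τ₁ + π / β with hτ₂def
  set Tp : ℝ := τ₂ + π / (2 * α) with hTpdef
  have hτ₁0 : 0 < τ₁ := by positivity
  have hτ₁₂ : τ₁ < τ₂ := by
    rw [hτ₂def]
    have h : 0 < π / β := by positivity
    linarith
  have hτ₂T : τ₂ < Tp := by
    rw [hTpdef]
    have h : 0 < π / (2 * α) := by positivity
    linarith
  -- explicit pieces
  set h₁ : ℝ → ℝ × ℝ := fun t => (Real.cos (α*t), -(α * Real.sin (α*t))) with h₁def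
  set h₂ : ℝ → ℝ × ℝ := fun t => (-(α/β * Real.sin (β*(t-τ₁))), -(α * Real.cos (β*(t-τ₁)))) with h₂def
  set h₃ : ℝ → ℝ × ℝ := fun t => (Real.sin (α*(t-τ₂)), α * Real.cos (α*(t-τ₂))) with h₃def
  have hd1 : ∀ s ∈ Icc (0:ℝ) τ₁, HasDerivAt h₁ (F (h₁ s)) s := by
    intro s hs
    have hcos : 0 ≤ Real.cos (α*s) := by
      apply Real.cos_nonneg_of_mem_Icc
      constructor
      · nlinarith [hs.1]
      · have h2 : α * s ≤ α * τ₁ :=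
          mul_le_mul_of_nonneg_left (by linarith [hs.2]) hα0.le
        have h3 : α * τ₁ = π / 2 := by
          rw [hτ₁def]; field_simp
        linarith
    have hFeq : F (h₁ s) = (-(α * Real.sin (α*s)), -(a * Real.cos (α*s))) := by
      simp only [hFdef, h₁def]
      rw [max_eq_left hcos, max_eq_right (neg_nonpos.mpr hcos)]
      simp only [Prod.mk.injEq]
      constructor
      · trivial
      · ring
    rw [hFeq]
    have d1 : HasDerivAt (fun u => Real.cos (α*u)) (-(α * Real.sin (α*s))) s := by
      have h := ((hasDerivAt_id s).const_mul α).cos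
      simp only [id_eq] at h
      convert h using 1
      ring
    have d2 : HasDerivAt (fun u => -(α * Real.sin (α*u))) (-(a * Real.cos (α*s))) s := by
      have h := (((hasDerivAt_id s).const_mul α).sin.const_mul α).neg
      simp only [id_eq] at h
      refine HasDerivAt.congr_deriv h ?_
      rw [← hαa]; ring
    exact d1.prodMk d2
  have hd2 : ∀ s ∈ Icc τ₁ τ₂, HasDerivAt h₂ (F (h₂ s)) s := by
    intro s hs
    have hsin : 0 ≤ Real.sin (β*(s-τ₁)) := by
      apply Real.sin_nonneg_of_nonneg_of_le_pi
      · nlinarith [hs.1]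
      · have h2 : β * (s - τ₁) ≤ β * (τ₂ - τ₁) :=
          mul_le_mul_of_nonneg_left (by linarith [hs.2]) hβ0.le
        have h3 : β * (τ₂ - τ₁) = π := by
          rw [hτ₂def]; field_simp; ring
        linarith
    have hx : -(α/β * Real.sin (β*(s-τ₁))) ≤ 0 := by
      have h : 0 ≤ α/β * Real.sin (β*(s-τ₁)) := by positivity
      linarith
    have hFeq : F (h₂ s) = (-(α * Real.cos (β*(s-τ₁))), α * β * Real.sin (β*(s-τ₁))) := by
      simp only [hFdef, h₂def]
      rw [neg_neg, max_eq_left (neg_nonpos.mp (neg_neg (α/β * Real.sin (β*(s-τ₁))) ▸ hx)),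
        max_eq_right hx]
      simp only [Prod.mk.injEq]
      constructor
      · trivial
      · rw [← hβb]; field_simp; ring
    rw [hFeq]
    have d1 : HasDerivAt (fun u => -(α/β * Real.sin (β*(u-τ₁)))) (-(α * Real.cos (β*(s-τ₁)))) s := by
      have h := ((((hasDerivAt_id s).sub_const τ₁).const_mul β).sin.const_mul (α/β)).neg
      simp only [id_eq] at h
      refine HasDerivAt.congr_deriv h ?_
      field_simp
    have d2 : HasDerivAt (fun u => -(α * Real.cos (β*(u-τ₁)))) (α * β * Real.sin (β*(s-τ₁))) s := by
      have h := ((((hasDerivAt_id s).sub_const τ₁).const_mul β).cos.const_mul α).neg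
      simp only [id_eq] at h
      refine HasDerivAt.congr_deriv h ?_
      ring
    exact d1.prodMk d2
  have hd3 : ∀ s ∈ Icc τ₂ Tp, HasDerivAt h₃ (F (h₃ s)) s := by
    intro s hs
    have hsin : 0 ≤ Real.sin (α*(s-τ₂)) := by
      apply Real.sin_nonneg_of_nonneg_of_le_pi
      · nlinarith [hs.1]
      · have h2 : α * (s - τ₂) ≤ α * (Tp - τ₂) :=
          mul_le_mul_of_nonneg_left (by linarith [hs.2]) hα0.le
        have h3 : α * (Tp - τ₂) = π / 2 := by
          rw [hTpdef]; field_simp; ring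
        exact h2.trans (h3.le.trans (by linarith [Real.pi_pos]))
    have hFeq : F (h₃ s) = (α * Real.cos (α*(s-τ₂)), -(a * Real.sin (α*(s-τ₂)))) := by
      simp only [hFdef, h₃def]
      rw [max_eq_left hsin, max_eq_right (neg_nonpos.mpr hsin)]
      simp only [Prod.mk.injEq]
      constructor
      · trivial
      · ring
    rw [hFeq]
    have d1 : HasDerivAt (fun u => Real.sin (α*(u-τ₂))) (α * Real.cos (α*(s-τ₂))) s := by
      have h := (((hasDerivAt_id s).sub_const τ₂).const_mul α).sin
      simp only [id_eq] at h
      convert h using 1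
      ring
    have d2 : HasDerivAt (fun u => α * Real.cos (α*(u-τ₂))) (-(a * Real.sin (α*(s-τ₂)))) s := by
      have h := (((hasDerivAt_id s).sub_const τ₂).const_mul α).cos.const_mul α
      simp only [id_eq] at h
      refine HasDerivAt.congr_deriv h ?_
      rw [← hαa]; ring
    exact d1.prodMk d2
  -- junction values
  have hj0 : g 0 = h₁ 0 := by
    rw [hgdef, h₁def]
    simp [hinit0, hinit1]
  have hv1 : α * τ₁ = π / 2 := by
    rw [hτ₁def]; field_simp
  have hj1 : h₁ τ₁ = h₂ τ₁ := by
    rw [h₁def, h₂def]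
    simp [hv1]
  have hv2 : β * (τ₂ - τ₁) = π := by
    rw [hτ₂def]; field_simp; ring
  have hj2 : h₂ τ₂ = h₃ τ₂ := by
    rw [h₂def, h₃def]
    simp [hv2]
  have hv3 : α * (Tp - τ₂) = π / 2 := by
    rw [hTpdef]; field_simp; ring
  have hj3 : h₃ Tp = (1, 0) := by
    rw [h₃def]
    simp [hv3]
  -- chain the uniqueness results
  have e1 : g τ₁ = h₁ τ₁ :=
    uniq_aux hFlip (fun s _ => hg' s) hd1 hj0 τ₁ ⟨hτ₁0.le, le_rfl⟩
  have e2 : g τ₂ = h₂ τ₂ :=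
    uniq_aux hFlip (fun s _ => hg' s) hd2 (e1.trans hj1) τ₂ ⟨hτ₁₂.le, le_rfl⟩
  have e3 : g Tp = (1, 0) := by
    have h := uniq_aux hFlip (fun s _ => hg' s) hd3 (e2.trans hj2) Tp ⟨hτ₂T.le, le_rfl⟩
    rw [h, hj3]
  -- periodicity via uniqueness on ℝ
  have hgshift : ∀ s, HasDerivAt (fun u => g (u + Tp)) (F (g (s + Tp))) s := by
    intro s
    have h1 := (hg' (s + Tp)).scomp s ((hasDerivAt_id s).add_const Tp)
    exact h1.congr_deriv (one_smul _ _)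
  have hper : ∀ s, g (s + Tp) = g s := by
    apply uniq_aux2 hFlip hgshift hg'
    show g (0 + Tp) = g 0
    rw [zero_add, e3, hgdef]
    simp [hinit0, hinit1]
  -- conclude
  intro t
  have hT : 2 * π * ω' = Tp := by
    rw [hω, hTpdef, hτ₂def, hτ₁def]
    field_simp
    ring
  have hC : C (t + Tp) = C t := congrArg Prod.fst (hper t)
  rw [hT, hC]
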